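/- Let n > 1 be a composite integer and let S be a Schur partition of the cyclic group ℤ/nℤ such that the only subgroups of ℤ/nℤ that are unions of blocks of S are the trivial subgroup and ℤ/nℤ itself. Then S is the trivial Schur partition {{0}, (ℤ/nℤ) ∖ {0}}. -/

import Mathlib

open scoped Pointwise

noncomputable def classSum {G : Type*} [AddCommGroup G] (C : Set G) :
    AddMonoidAlgebra ℚ G :=
  ∑ᶠ g ∈ C, AddMonoidAlgebra.single g (1 : ℚ)

def IsSchurPartition {G : Type*} [AddCommGroup G] (P : Set (Set G)) : Prop :=
  Setoid.IsPartition P ∧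
  ({0} : Set G) ∈ P ∧
  (∀ C ∈ P, -C ∈ P) ∧
  ∀ C ∈ P, ∀ D ∈ P,
    classSum C * classSum D ∈ AddSubmonoid.closure (classSum '' P)

noncomputable def Omega (n : ℕ) : ℕ :=
  Nat.card {P : Set (Set (ZMod n)) // IsSchurPartition P}

/-- `A` is a union of blocks of the partition `P`: every block meeting `A` lies in `A`. -/
def IsBlockUnion {G : Type*} (P : Set (Set G)) (A : Set G) : Prop :=
  ∀ C ∈ P, (C ∩ A).Nonempty → C ⊆ A

namespace SchurPf
open Finset
open scoped Classical

variable {G : Type*} [AddCommGroup G] [Fintype G] [DecidableEq G]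

lemma coeff_sum_single {ι : Type*} (s : Finset ι) (a : ι → G) (x : G) :
    (∑ i ∈ s, AddMonoidAlgebra.single (a i) (1 : ℚ)).coeff x
      = ((s.filter (fun i => a i = x)).card : ℚ) := by
  rw [AddMonoidAlgebra.coeff_sum, Finset.sum_apply']
  rw [Finset.card_filter]
  push_cast
  exact Finset.sum_congr rfl fun i _ => by
    rw [AddMonoidAlgebra.coeff_single, Finsupp.single_apply]

lemma classSum_eq_sum (C : Set G) :
    classSum C = ∑ g ∈ C.toFinset, AddMonoidAlgebra.single g (1 : ℚ) := by
  rw [classSum, ← finsum_mem_coe_finset, Set.coe_toFinset]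

lemma classSum_apply (C : Set G) (x : G) :
    (classSum C).coeff x = if x ∈ C then 1 else 0 := by
  rw [classSum_eq_sum, coeff_sum_single]
  by_cases h : x ∈ C
  · rw [if_pos h]
    have : C.toFinset.filter (fun i => i = x) = {x} := by
      ext y; simp only [Finset.mem_filter, Set.mem_toFinset, Finset.mem_singleton]
      exact ⟨fun a => a.2, fun a => ⟨a ▸ h, a⟩⟩
    rw [this]; simp
  · rw [if_neg h]
    have : C.toFinset.filter (fun i => i = x) = ∅ := by
      ext y; simp [Finset.mem_filter]; rintro hy rfl; exact h hy
    rw [this]; simp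

lemma classSum_mul_apply (A B : Set G) (x : G) :
    (classSum A * classSum B).coeff x
      = (((A.toFinset ×ˢ B.toFinset).filter (fun q => q.1 + q.2 = x)).card : ℚ) := by
  rw [classSum_eq_sum A, classSum_eq_sum B, Finset.sum_mul_sum]
  have : ∀ (a b : G), (AddMonoidAlgebra.single a (1:ℚ)) * AddMonoidAlgebra.single b 1
      = AddMonoidAlgebra.single (a+b) 1 := by
    intro a b; rw [AddMonoidAlgebra.single_mul_single, one_mul]
  simp_rw [this]
  rw [← Finset.sum_product']
  exact coeff_sum_single _ _ x

lemma classSum_pow_apply (T : Set G) (ι : Type) [Fintype ι] [DecidableEq ι] (u : G) :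
    ((classSum T) ^ (Fintype.card ι)).coeff u
      = (((Fintype.piFinset (fun _ : ι => T.toFinset)).filter
          (fun f => ∑ i, f i = u)).card : ℚ) := by
  have h1 : (classSum T) ^ (Fintype.card ι) = ∏ _i : ι, classSum T := by
    rw [Finset.prod_const, Finset.card_univ]
  rw [h1, classSum_eq_sum, Finset.prod_univ_sum]
  simp_rw [AddMonoidAlgebra.prod_single, Finset.prod_const_one]
  exact coeff_sum_single _ _ u


variable {S : Set (Set G)}

lemma block_eq_of_mem (hP : Setoid.IsPartition S) {C D : Set G} (hC : C ∈ S) (hD : D ∈ S)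
    {x : G} (hxC : x ∈ C) (hxD : x ∈ D) : C = D := by
  obtain ⟨B, _hB, hu⟩ := hP.2 x
  rw [hu C ⟨hC, hxC⟩, hu D ⟨hD, hxD⟩]

lemma coeff_const (hS : IsSchurPartition S) {z : AddMonoidAlgebra ℚ G}
    (hz : z ∈ AddSubmonoid.closure (classSum '' S)) {C : Set G} (hC : C ∈ S)
    {y y' : G} (hy : y ∈ C) (hy' : y' ∈ C) : z.coeff y = z.coeff y' := by
  induction hz using AddSubmonoid.closure_induction with
  | mem w hw =>
      obtain ⟨D, hD, rfl⟩ := hw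
      rw [classSum_apply, classSum_apply]
      by_cases h : y ∈ D
      · have hDC : D = C := block_eq_of_mem hS.1 hD hC h hy
        subst hDC
        rw [if_pos h, if_pos hy']
      · have h' : y' ∉ D := by
          intro h'
          exact h ((block_eq_of_mem hS.1 hD hC h' hy') ▸ hy)
        rw [if_neg h, if_neg h']
  | zero => rfl
  | add a b _ _ ha hb =>
      show (a + b).coeff y = (a + b).coeff y'
      rw [AddMonoidAlgebra.coeff_add, Finsupp.add_apply, Finsupp.add_apply, ha, hb]

lemma mul_mem_closure (hS : IsSchurPartition S) {x y : AddMonoidAlgebra ℚ G}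
    (hx : x ∈ AddSubmonoid.closure (classSum '' S))
    (hy : y ∈ AddSubmonoid.closure (classSum '' S)) :
    x * y ∈ AddSubmonoid.closure (classSum '' S) := by
  induction hx using AddSubmonoid.closure_induction with
  | mem w hw =>
      induction hy using AddSubmonoid.closure_induction with
      | mem v hv =>
          obtain ⟨CC, hC, rfl⟩ := hw
          obtain ⟨D, hD, rfl⟩ := hv
          exact hS.2.2.2 CC hC D hD
      | zero => rw [mul_zero]; exact zero_mem _
      | add a b _ _ ha hb => rw [mul_add]; exact add_mem ha hb
  | zero => rw [zero_mul]; exact zero_mem _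
  | add a b _ _ ha hb => rw [add_mul]; exact add_mem ha hb

lemma isBlockUnion_coeff (hS : IsSchurPartition S) {z : AddMonoidAlgebra ℚ G}
    (hz : z ∈ AddSubmonoid.closure (classSum '' S)) (Q : ℚ → Prop) :
    IsBlockUnion S {x | Q (z.coeff x)} := by
  intro C hC hne x hx
  obtain ⟨y, hyC, hyQ⟩ := hne
  show Q (z.coeff x)
  rw [coeff_const hS hz hC hx hyC]
  exact hyQ

lemma isBlockUnion_sumset (hS : IsSchurPartition S) {A B : Set G}
    (hA : A ∈ S) (hB : B ∈ S) : IsBlockUnion S (A + B) := by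
  have h := isBlockUnion_coeff hS (hS.2.2.2 A hA B hB) (fun q => q ≠ 0)
  have he : {x : G | (classSum A * classSum B).coeff x ≠ 0} = A + B := by
    ext x
    rw [Set.mem_setOf_eq, classSum_mul_apply]
    constructor
    · intro hne
      have : ((A.toFinset ×ˢ B.toFinset).filter (fun q => q.1 + q.2 = x)).Nonempty := by
        rw [Finset.nonempty_iff_ne_empty]
        intro hemp
        rw [hemp] at hne; simp at hne
      obtain ⟨q, hq⟩ := this
      rw [Finset.mem_filter, Finset.mem_product] at hq
      exact ⟨q.1, by simpa using hq.1.1, q.2, by simpa using hq.1.2, hq.2⟩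
    · rintro ⟨a, ha, b, hb, rfl⟩
      have : (a, b) ∈ (A.toFinset ×ˢ B.toFinset).filter (fun q => q.1 + q.2 = a + b) := by
        rw [Finset.mem_filter, Finset.mem_product]
        exact ⟨⟨by simpa using ha, by simpa using hb⟩, rfl⟩
      have hpos : 0 < ((A.toFinset ×ˢ B.toFinset).filter (fun q => q.1 + q.2 = a + b)).card :=
        Finset.card_pos.mpr ⟨_, this⟩
      positivity
  rwa [he] at h

lemma zero_block_unique (hS : IsSchurPartition S) {C : Set G} (hC : C ∈ S) (h0 : (0:G) ∈ C) :
    C = {0} :=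
  block_eq_of_mem hS.1 hC hS.2.1 h0 rfl

lemma block_nonempty (hS : IsSchurPartition S) {C : Set G} (hC : C ∈ S) : C.Nonempty := by
  rcases Set.eq_empty_or_nonempty C with h | h
  · exact absurd (h ▸ hC) hS.1.1
  · exact h

lemma exists_nonzero_mem (hS : IsSchurPartition S) {C : Set G} (hC : C ∈ S) (hC0 : C ≠ {0}) :
    ∃ x ∈ C, x ≠ 0 := by
  by_contra h
  push_neg at h
  apply hC0
  apply Set.eq_singleton_iff_nonempty_unique_mem.mpr
  exact ⟨block_nonempty hS hC, h⟩

lemma block_closure_eq (hS : IsSchurPartition S) {T : Set G} (hT : T ∈ S) :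
    IsBlockUnion S ((AddSubgroup.closure T : AddSubgroup G) : Set G) := by
  set J : Set G := ((AddSubgroup.closure T : AddSubgroup G) : Set G) with hJ
  set A : Set G := ⋃₀ {C | C ∈ S ∧ C ⊆ J} with hA
  have hAJ : A ⊆ J := by
    rintro x ⟨C, ⟨_, hCJ⟩, hx⟩
    exact hCJ hx
  -- A is closed under the subgroup operations
  have hzero : (0:G) ∈ A := by
    refine ⟨{0}, ⟨hS.2.1, ?_⟩, rfl⟩
    intro x hx
    rw [hx]
    exact (AddSubgroup.closure T).zero_mem
  have hadd : ∀ x ∈ A, ∀ y ∈ A, x + y ∈ A := by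
    rintro x ⟨C, ⟨hC, hCJ⟩, hx⟩ y ⟨D, ⟨hD, hDJ⟩, hy⟩
    obtain ⟨E, ⟨hE, hxyE⟩, _⟩ := hS.1.2 (x + y)
    have hEsub : E ⊆ C + D :=
      isBlockUnion_sumset hS hC hD E hE ⟨x + y, hxyE, Set.add_mem_add hx hy⟩
    refine ⟨E, ⟨hE, ?_⟩, hxyE⟩
    intro w hw
    obtain ⟨a, ha, b, hb, rfl⟩ := hEsub hw
    exact (AddSubgroup.closure T).add_mem (hCJ ha) (hDJ hb)
  have hneg : ∀ x ∈ A, -x ∈ A := by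
    rintro x ⟨C, ⟨hC, hCJ⟩, hx⟩
    refine ⟨-C, ⟨hS.2.2.1 C hC, ?_⟩, by simpa using hx⟩
    intro w hw
    have : -w ∈ C := by simpa using hw
    have := hCJ this
    simpa [hJ] using (AddSubgroup.closure T).neg_mem this
  have hTA : T ⊆ A := by
    intro x hx
    exact ⟨T, ⟨hT, fun y hy => AddSubgroup.subset_closure hy⟩, hx⟩
  -- hence A = J
  have hJA : J ⊆ A := by
    set A' : AddSubgroup G :=
      { carrier := A
        zero_mem' := hzero
        add_mem' := fun ha hb => hadd _ ha _ hb
        neg_mem' := fun ha => hneg _ ha }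
    have : AddSubgroup.closure T ≤ A' := AddSubgroup.closure_le A' |>.mpr hTA
    exact fun x hx => this hx
  have hAeq : A = J := Set.Subset.antisymm hAJ hJA
  intro C hC hne x hx
  obtain ⟨y, hyC, hyJ⟩ := hne
  rw [← hAeq] at hyJ ⊢
  obtain ⟨D, ⟨hD, hDJ⟩, hyD⟩ := hyJ
  have : C = D := block_eq_of_mem hS.1 hC hD hyC hyD
  exact ⟨D, ⟨hD, hDJ⟩, this ▸ hx⟩


lemma closure_eq_top (hS : IsSchurPartition S)
    (hprim : ∀ H : AddSubgroup G, IsBlockUnion S (H : Set G) → H = ⊥ ∨ H = ⊤)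
    {T : Set G} (hT : T ∈ S) (hT0 : T ≠ {0}) {H : AddSubgroup G} (hTH : T ⊆ (H : Set G)) :
    H = ⊤ := by
  have hbu := block_closure_eq hS hT
  rcases hprim _ hbu with h | h
  · obtain ⟨x, hxT, hx0⟩ := exists_nonzero_mem hS hT hT0
    have hx : x ∈ AddSubgroup.closure T := AddSubgroup.subset_closure hxT
    rw [h] at hx
    exact absurd (by simpa using hx) hx0
  · have hle : AddSubgroup.closure T ≤ H := (AddSubgroup.closure_le H).mpr hTH
    rw [h] at hle
    exact eq_top_iff.mpr hle

lemma count_pow_modEq (p : ℕ) [hp : Fact p.Prime] (T : Finset G) (u : G) :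
    ((Fintype.piFinset (fun _ : ZMod p => T)).filter (fun f => ∑ i, f i = u)).card
      ≡ (T.filter (fun t => p • t = u)).card [MOD p] := by
  haveI : NeZero p := ⟨hp.out.ne_zero⟩
  set α := {f : ZMod p → G // (∀ i, f i ∈ T) ∧ ∑ i, f i = u} with hα
  have hsum : ∀ (k : ZMod p) (f : ZMod p → G), ∑ i, f (i + k) = ∑ i, f i := by
    intro k f
    exact Fintype.sum_equiv (Equiv.addRight k) _ _ (fun i => rfl)
  letI act : MulAction (Multiplicative (ZMod p)) α :=
    { smul := fun k f => ⟨fun i => f.1 (i + k.toAdd),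
        ⟨fun i => f.2.1 _, by rw [hsum]; exact f.2.2⟩⟩
      one_smul := fun f => Subtype.ext (funext fun i => by
        show f.1 (i + (1 : Multiplicative (ZMod p)).toAdd) = f.1 i
        simp)
      mul_smul := fun k l f => Subtype.ext (funext fun i => by
        show f.1 (i + (k * l).toAdd) = f.1 (i + k.toAdd + l.toAdd)
        rw [add_assoc]
        rfl) }
  have hpg : IsPGroup p (Multiplicative (ZMod p)) := by
    apply IsPGroup.of_card (n := 1)
    simp [ZMod.card]
  have hcongr := hpg.card_modEq_card_fixedPoints (α := α)
  -- identify Nat.card α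
  have h1 : Nat.card α
      = ((Fintype.piFinset (fun _ : ZMod p => T)).filter (fun f => ∑ i, f i = u)).card := by
    rw [Nat.card_eq_fintype_card, ← Fintype.card_coe]
    refine Fintype.card_congr (Equiv.subtypeEquivRight ?_)
    intro f
    simp [Fintype.mem_piFinset, Finset.mem_filter, and_comm]
  -- constant functions lemma
  have hconst : ∀ F : α, F ∈ MulAction.fixedPoints (Multiplicative (ZMod p)) α →
      ∀ i, F.1 i = F.1 0 := by
    intro F hF i
    have := hF (Multiplicative.ofAdd i)
    have h2 := congrFun (congrArg Subtype.val this) 0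
    show F.1 i = F.1 0
    rw [← h2]
    show F.1 i = F.1 (0 + i)
    rw [zero_add]
  have h2 : Nat.card (MulAction.fixedPoints (Multiplicative (ZMod p)) α)
      = (T.filter (fun t => p • t = u)).card := by
    rw [Nat.card_eq_fintype_card, ← Fintype.card_coe]
    refine Fintype.card_congr ?_
    refine
      { toFun := fun F => ⟨F.1.1 0, ?_⟩
        invFun := fun t => ⟨⟨fun _ => t.1, ⟨fun _ => ?_, ?_⟩⟩, ?_⟩
        left_inv := ?_
        right_inv := ?_ }
    · rw [Finset.mem_filter]
      refine ⟨F.1.2.1 0, ?_⟩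
      have hs := F.1.2.2
      calc p • F.1.1 0 = ∑ _i : ZMod p, F.1.1 0 := by
            rw [Finset.sum_const, Finset.card_univ, ZMod.card]
        _ = ∑ i, F.1.1 i := Finset.sum_congr rfl (fun i _ => (hconst F.1 F.2 i).symm)
        _ = u := hs
    · exact (Finset.mem_filter.mp t.2).1
    · rw [Finset.sum_const, Finset.card_univ, ZMod.card]
      exact (Finset.mem_filter.mp t.2).2
    · intro k
      exact Subtype.ext (funext fun i => rfl)
    · intro F
      refine Subtype.ext (Subtype.ext (funext fun i => ?_))
      exact (hconst F.1 F.2 i).symm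
    · intro t
      rfl
  rw [h1, h2] at hcongr
  exact hcongr


lemma mulneg_apply (T : Set G) (y : G) :
    (classSum T * classSum (-T)).coeff y
      = ((T.toFinset.filter fun a => a - y ∈ T).card : ℚ) := by
  rw [classSum_mul_apply]
  congr 1
  norm_cast
  refine Finset.card_bij (fun q _ => q.1) ?_ ?_ ?_
  · rintro ⟨a, b⟩ hq
    rw [Finset.mem_filter, Finset.mem_product] at hq
    obtain ⟨⟨ha, hb⟩, hsum⟩ := hq
    rw [Finset.mem_filter]
    refine ⟨ha, ?_⟩
    rw [Set.mem_toFinset, Set.mem_neg] at hb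
    have hsum' : a + b = y := hsum
    have : a - y = -b := by rw [← hsum']; abel
    rwa [this]
  · rintro ⟨a, b⟩ hq ⟨a', b'⟩ hq' h
    rw [Finset.mem_filter] at hq hq'
    have h1 : a + b = y := hq.2
    have h2 : a' + b' = y := hq'.2
    have : a = a' := h
    refine Prod.ext this ?_
    subst this
    exact add_left_cancel (h1.trans h2.symm)
  · intro a ha
    rw [Finset.mem_filter, Set.mem_toFinset] at ha
    refine ⟨(a, y - a), ?_, rfl⟩
    rw [Finset.mem_filter, Finset.mem_product]
    refine ⟨⟨Set.mem_toFinset.mpr ha.1, ?_⟩, show a + (y - a) = y by abel⟩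
    rw [Set.mem_toFinset, Set.mem_neg]
    have : -(y - a) = a - y := by abel
    rw [this]
    exact ha.2

lemma gN_eq_pairN (T : Set G) (y : G) :
    (T.toFinset.filter fun a => a - y ∈ T).card
      = ((T.toFinset ×ˢ T.toFinset).filter fun q => q.1 - q.2 = y).card := by
  refine Finset.card_bij (fun a _ => (a, a - y)) ?_ ?_ ?_
  · intro a ha
    rw [Finset.mem_filter, Set.mem_toFinset] at ha
    rw [Finset.mem_filter, Finset.mem_product]
    exact ⟨⟨Set.mem_toFinset.mpr ha.1, Set.mem_toFinset.mpr ha.2⟩, show a - (a - y) = y by abel⟩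
  · intro a _ a' _ h
    exact (Prod.ext_iff.mp h).1
  · rintro ⟨a, b⟩ hq
    rw [Finset.mem_filter, Finset.mem_product] at hq
    refine ⟨a, ?_, ?_⟩
    · rw [Finset.mem_filter]
      refine ⟨hq.1.1, ?_⟩
      have h2 : a - b = y := hq.2
      have : a - y = b := by rw [← h2]; abel
      rw [this]
      exact Set.mem_toFinset.mp hq.1.2
    · have h2 : a - b = y := hq.2
      have : a - y = b := by rw [← h2]; abel
      rw [Prod.ext_iff]
      exact ⟨rfl, this⟩

lemma sum_gN (T : Set G) :
    ∑ y : G, (T.toFinset.filter fun a => a - y ∈ T).card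
      = T.toFinset.card ^ 2 := by
  have h := Finset.card_eq_sum_card_fiberwise
    (f := fun q : G × G => q.1 - q.2) (s := T.toFinset ×ˢ T.toFinset) (t := Finset.univ)
    (fun x _ => Finset.mem_univ _)
  rw [Finset.card_product] at h
  rw [Finset.sum_congr rfl (fun y _ => gN_eq_pairN T y), ← h, sq]


lemma pow_mem_closure (hS : IsSchurPartition S) {x : AddMonoidAlgebra ℚ G}
    (hx : x ∈ AddSubmonoid.closure (classSum '' S)) :
    ∀ k : ℕ, 1 ≤ k → x ^ k ∈ AddSubmonoid.closure (classSum '' S) := by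
  intro k hk
  induction k with
  | zero => omega
  | succ m ih =>
      rcases Nat.eq_or_lt_of_le hk with h | h
      · rw [← h, pow_one]; exact hx
      · have hm : 1 ≤ m := by omega
        rw [pow_succ]
        exact mul_mem_closure hS (ih hm) hx

end SchurPf

namespace SchurPf2
open Finset SchurPf
open scoped Classical

variable {n : ℕ} [NeZero n] {p : ℕ}

lemma card_torsion_le (hp : p.Prime) (hpn : p ∣ n) :
    (Finset.univ.filter fun z : ZMod n => p • z = 0).card ≤ p := by
  have hn0 : 0 < n := Nat.pos_of_ne_zero (NeZero.ne n)
  have hp0 : 0 < p := hp.pos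
  have hnp : 0 < n / p := Nat.div_pos (Nat.le_of_dvd hn0 hpn) hp0
  have hsub : (Finset.univ.filter fun z : ZMod n => p • z = 0)
      ⊆ (Finset.range p).image (fun k : ℕ => ((k * (n / p) : ℕ) : ZMod n)) := by
    intro z hz
    rw [Finset.mem_filter] at hz
    have hz0 : p • z = 0 := hz.2
    have hv : ((z.val : ℕ) : ZMod n) = z := ZMod.natCast_rightInverse z
    have hdvd : n ∣ p * z.val := by
      rw [← ZMod.natCast_eq_zero_iff]
      push_cast
      rw [hv, ← nsmul_eq_mul]
      exact hz0
    have hndiv : (n / p) ∣ z.val := by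
      have h1 : p * (n / p) ∣ p * z.val := by
        rw [Nat.mul_div_cancel' hpn]; exact hdvd
      exact (Nat.mul_dvd_mul_iff_left hp0).mp h1
    rw [Finset.mem_image]
    refine ⟨z.val / (n / p), ?_, ?_⟩
    · rw [Finset.mem_range, Nat.div_lt_iff_lt_mul hnp]
      calc z.val < n := ZMod.val_lt z
        _ = p * (n / p) := (Nat.mul_div_cancel' hpn).symm
    · rw [Nat.div_mul_cancel hndiv, hv]
  calc (Finset.univ.filter fun z : ZMod n => p • z = 0).card
      ≤ ((Finset.range p).image (fun k : ℕ => ((k * (n / p) : ℕ) : ZMod n))).card :=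
        Finset.card_le_card hsub
    _ ≤ (Finset.range p).card := Finset.card_image_le
    _ = p := Finset.card_range p

lemma exists_torsion_ne_zero (hp : p.Prime) (hpn : p ∣ n) :
    ∃ y : ZMod n, y ≠ 0 ∧ p • y = 0 := by
  have hn0 : 0 < n := Nat.pos_of_ne_zero (NeZero.ne n)
  have hnp : 0 < n / p := Nat.div_pos (Nat.le_of_dvd hn0 hpn) hp.pos
  refine ⟨((n / p : ℕ) : ZMod n), ?_, ?_⟩
  · intro h
    rw [ZMod.natCast_eq_zero_iff] at h
    have h1 := Nat.le_of_dvd hnp h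
    have h2 : n / p < n := Nat.div_lt_self hn0 hp.one_lt
    omega
  · rw [nsmul_eq_mul, ← Nat.cast_mul, Nat.mul_div_cancel' hpn, ZMod.natCast_self]

variable {S : Set (Set (ZMod n))}

lemma dvd_count (hS : IsSchurPartition S)
    (hprim : ∀ H : AddSubgroup (ZMod n), IsBlockUnion S (H : Set (ZMod n)) → H = ⊥ ∨ H = ⊤)
    (hp : p.Prime) (hpn : p ∣ n)
    {T : Set (ZMod n)} (hT : T ∈ S) (hT0 : T ≠ {0}) {u : ZMod n} (hu : u ≠ 0) :
    p ∣ (T.toFinset.filter fun t => p • t = u).card := by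
  haveI : Fact p.Prime := ⟨hp⟩
  by_contra hnd
  set M : ZMod n → ℕ := fun v => (T.toFinset.filter fun t => p • t = v).card with hM
  set N : ZMod n → ℕ := fun v =>
    ((Fintype.piFinset (fun _ : ZMod p => T.toFinset)).filter (fun f => ∑ i, f i = v)).card with hN
  have hz : (classSum T) ^ p ∈ AddSubmonoid.closure (classSum '' S) :=
    pow_mem_closure hS (AddSubmonoid.subset_closure ⟨T, hT, rfl⟩) p hp.one_le
  have hzap : ∀ v : ZMod n, ((classSum T) ^ p).coeff v = (N v : ℚ) := by
    intro v
    have := classSum_pow_apply T (ZMod p) v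
    rwa [ZMod.card p] at this
  have hMN : ∀ v : ZMod n, N v ≡ M v [MOD p] := fun v => count_pow_modEq p T.toFinset v
  set W : Set (ZMod n) := {v | ¬ (p ∣ M v)} with hW
  have hWbu : IsBlockUnion S W := by
    intro C hC hne x hx
    obtain ⟨y, hyC, hyW⟩ := hne
    show ¬ (p ∣ M x)
    have hco : ((classSum T) ^ p).coeff x = ((classSum T) ^ p).coeff y := coeff_const hS hz hC hx hyC
    rw [hzap, hzap] at hco
    have hNxy : N x = N y := by exact_mod_cast hco
    have hmod : M x ≡ M y [MOD p] := (hMN x).symm.trans (hNxy ▸ (hMN y))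
    intro hdx
    exact hyW ((Nat.modEq_zero_iff_dvd).mp (hmod.symm.trans ((Nat.modEq_zero_iff_dvd).mpr hdx)))
  -- the subgroup p • (ZMod n)
  set f : ZMod n →+ ZMod n := AddMonoidHom.mk' (fun x : ZMod n => p • x)
    (fun a b => smul_add p a b) with hf
  set H : AddSubgroup (ZMod n) := f.range with hH
  have hone : (1 : ZMod n) ∉ (H : Set (ZMod n)) := by
    rintro ⟨x, hx⟩
    have hx' : p • x = 1 := hx
    have := congrArg (ZMod.castHom hpn (ZMod p)) hx'
    rw [map_nsmul, map_one, nsmul_eq_mul, ZMod.natCast_self, zero_mul] at this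
    exact zero_ne_one this
  -- the block of u
  obtain ⟨C, ⟨hC, huC⟩, _⟩ := hS.1.2 u
  have hC0 : C ≠ {0} := by
    intro h
    rw [h] at huC
    exact hu huC
  have hCW : C ⊆ W := hWbu C hC ⟨u, huC, hnd⟩
  have hCH : C ⊆ (H : Set (ZMod n)) := by
    intro v hv
    have hvW : ¬ (p ∣ M v) := hCW hv
    have hMv : M v ≠ 0 := fun h => hvW (h ▸ dvd_zero p)
    have : (T.toFinset.filter fun t => p • t = v).Nonempty := Finset.card_pos.mp
      (Nat.pos_of_ne_zero hMv)
    obtain ⟨t, ht⟩ := this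
    rw [Finset.mem_filter] at ht
    exact ⟨t, ht.2⟩
  have htop := closure_eq_top hS hprim hC hC0 hCH
  rw [htop] at hone
  exact hone trivial

lemma coset_sub_block (hS : IsSchurPartition S)
    (hprim : ∀ H : AddSubgroup (ZMod n), IsBlockUnion S (H : Set (ZMod n)) → H = ⊥ ∨ H = ⊤)
    (hp : p.Prime) (hpn : p ∣ n)
    {T : Set (ZMod n)} (hT : T ∈ S) (hT0 : T ≠ {0}) {w : ZMod n} (hw : w ∈ T)
    (hw0 : p • w ≠ 0) :
    (Finset.univ.filter fun z : ZMod n => p • z = p • w) ⊆ T.toFinset ∧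
    p ≤ (Finset.univ.filter fun z : ZMod n => p • z = p • w).card := by
  set u := p • w with hu
  have hMd := dvd_count hS hprim hp hpn hT hT0 hw0
  have hM1 : 0 < (T.toFinset.filter fun t => p • t = u).card :=
    Finset.card_pos.mpr ⟨w, Finset.mem_filter.mpr ⟨Set.mem_toFinset.mpr hw, rfl⟩⟩
  have hMp : p ≤ (T.toFinset.filter fun t => p • t = u).card := Nat.le_of_dvd hM1 hMd
  have hsub : T.toFinset.filter (fun t => p • t = u) ⊆
      Finset.univ.filter (fun z => p • z = u) := by
    intro t ht
    rw [Finset.mem_filter] at ht ⊢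
    exact ⟨Finset.mem_univ t, ht.2⟩
  have hcst : (Finset.univ.filter fun z : ZMod n => p • z = u).card
      ≤ (Finset.univ.filter fun z : ZMod n => p • z = 0).card := by
    apply Finset.card_le_card_of_injOn (fun z => z - w)
    · intro z hz
      rw [Finset.mem_coe, Finset.mem_filter] at hz ⊢
      refine ⟨Finset.mem_univ _, ?_⟩
      rw [smul_sub, hz.2, hu, sub_self]
    · intro a _ b _ h
      exact sub_left_inj.mp h
  have hle : (Finset.univ.filter fun z : ZMod n => p • z = u).card ≤ p :=
    hcst.trans (card_torsion_le hp hpn)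
  have heq : T.toFinset.filter (fun t => p • t = u) = Finset.univ.filter (fun z => p • z = u) :=
    Finset.eq_of_subset_of_card_le hsub (hle.trans hMp)
  constructor
  · intro z hz
    rw [← heq] at hz
    exact (Finset.mem_filter.mp hz).1
  · exact hMp.trans (le_of_eq (congrArg Finset.card heq))

lemma block_meets_torsion (hS : IsSchurPartition S)
    (hprim : ∀ H : AddSubgroup (ZMod n), IsBlockUnion S (H : Set (ZMod n)) → H = ⊥ ∨ H = ⊤)
    (hp : p.Prime) (hpn : p ∣ n)
    {T : Set (ZMod n)} (hT : T ∈ S) (hT0 : T ≠ {0}) :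
    ∃ x ∈ T, p • x = 0 := by
  by_contra hcon
  push_neg at hcon
  obtain ⟨y0, hy0ne, hy0⟩ := exists_torsion_ne_zero (n := n) hp hpn
  set t := T.toFinset.card with ht
  have hchar : ∀ y : ZMod n, ((T.toFinset.filter fun a => a - y ∈ T).card = t)
      ↔ (∀ x : ZMod n, x ∈ T ↔ y + x ∈ T) := by
    intro y
    constructor
    · intro h
      have hfull : T.toFinset.filter (fun a => a - y ∈ T) = T.toFinset :=
        Finset.eq_of_subset_of_card_le (Finset.filter_subset _ _) (le_of_eq h.symm)
      have hmem : ∀ a ∈ T, a - y ∈ T := by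
        intro a ha
        have h1 : a ∈ T.toFinset.filter (fun a => a - y ∈ T) := by
          rw [hfull]; exact Set.mem_toFinset.mpr ha
        exact (Finset.mem_filter.mp h1).2
      have himg : T.toFinset.image (fun a => a - y) = T.toFinset := by
        apply Finset.eq_of_subset_of_card_le
        · intro b hb
          obtain ⟨a, ha, rfl⟩ := Finset.mem_image.mp hb
          exact Set.mem_toFinset.mpr (hmem a (Set.mem_toFinset.mp ha))
        · rw [Finset.card_image_of_injective _ (fun a b h => sub_left_inj.mp h)]
      intro x
      constructor
      · intro hx
        have h1 : x ∈ T.toFinset.image (fun a => a - y) := by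
          rw [himg]; exact Set.mem_toFinset.mpr hx
        obtain ⟨a, ha, hax⟩ := Finset.mem_image.mp h1
        have h2 : y + x = a := by rw [← hax]; abel
        rw [h2]
        exact Set.mem_toFinset.mp ha
      · intro hx
        have h1 : (y + x) - y ∈ T := hmem _ hx
        simpa using h1
    · intro h
      have h1 : T.toFinset.filter (fun a => a - y ∈ T) = T.toFinset := by
        apply Finset.filter_true_of_mem
        intro a ha
        have h2 := (h (a - y)).mpr
        have h3 : y + (a - y) = a := by abel
        rw [h3] at h2
        exact h2 (Set.mem_toFinset.mp ha)
      rw [h1]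
  set R : AddSubgroup (ZMod n) :=
    { carrier := {y | ∀ x : ZMod n, x ∈ T ↔ y + x ∈ T}
      zero_mem' := by intro x; rw [zero_add]
      add_mem' := by
        intro a b ha hb x
        refine (hb x).trans ((ha (b + x)).trans ?_)
        rw [add_assoc]
      neg_mem' := by
        intro a ha x
        refine ((ha (-a + x)).trans ?_).symm
        rw [add_neg_cancel_left] } with hR
  have hRbu : IsBlockUnion S (R : Set (ZMod n)) := by
    have hzcl := hS.2.2.2 T hT (-T) (hS.2.2.1 T hT)
    intro C hC hne x hx
    obtain ⟨y', hy'C, hy'R⟩ := hne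
    have hco : (classSum T * classSum (-T)).coeff x = (classSum T * classSum (-T)).coeff y' :=
      coeff_const hS hzcl hC hx hy'C
    rw [mulneg_apply, mulneg_apply] at hco
    have hcard : (T.toFinset.filter fun a => a - x ∈ T).card
        = (T.toFinset.filter fun a => a - y' ∈ T).card := by exact_mod_cast hco
    show ∀ z : ZMod n, z ∈ T ↔ x + z ∈ T
    apply (hchar x).mp
    rw [hcard]
    exact (hchar y').mpr hy'R
  rcases hprim R hRbu with hbot | htop
  · apply hy0ne
    have hy0R : y0 ∈ R := by
      intro x
      constructor
      · intro hx
        have hsat := (coset_sub_block hS hprim hp hpn hT hT0 hx (hcon x hx)).1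
        have : y0 + x ∈ Finset.univ.filter (fun z : ZMod n => p • z = p • x) := by
          rw [Finset.mem_filter]
          refine ⟨Finset.mem_univ _, ?_⟩
          rw [smul_add, hy0, zero_add]
        exact Set.mem_toFinset.mp (hsat this)
      · intro hx
        have hw0 : p • (y0 + x) ≠ 0 := hcon _ hx
        have hsat := (coset_sub_block hS hprim hp hpn hT hT0 hx hw0).1
        have : x ∈ Finset.univ.filter (fun z : ZMod n => p • z = p • (y0 + x)) := by
          rw [Finset.mem_filter]
          refine ⟨Finset.mem_univ _, ?_⟩
          rw [smul_add, hy0, zero_add]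
        exact Set.mem_toFinset.mp (hsat this)
    rw [hbot] at hy0R
    exact hy0R
  · obtain ⟨w0, hw0⟩ := block_nonempty hS hT
    have hmem : (-w0) ∈ R := by rw [htop]; trivial
    have h0T : (0 : ZMod n) ∈ T := by
      have := (hmem w0).mp hw0
      rwa [neg_add_cancel] at this
    exact hT0 (zero_block_unique hS hT h0T)

lemma gN_lower (hS : IsSchurPartition S)
    (hprim : ∀ H : AddSubgroup (ZMod n), IsBlockUnion S (H : Set (ZMod n)) → H = ⊥ ∨ H = ⊤)
    (hp : p.Prime) (hpn : p ∣ n)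
    {T : Set (ZMod n)} (hT : T ∈ S) (hT0 : T ≠ {0}) {y : ZMod n} (hy : y ≠ 0) :
    (T.toFinset.filter fun x => ¬ (p • x = 0)).card
      ≤ (T.toFinset.filter fun a => a - y ∈ T).card := by
  obtain ⟨C, ⟨hC, hyC⟩, _⟩ := hS.1.2 y
  have hC0 : C ≠ {0} := by
    intro h; rw [h] at hyC; exact hy hyC
  obtain ⟨x0, hx0C, hx0t⟩ := block_meets_torsion hS hprim hp hpn hC hC0
  have hzcl := hS.2.2.2 T hT (-T) (hS.2.2.1 T hT)
  have hco : (classSum T * classSum (-T)).coeff y = (classSum T * classSum (-T)).coeff x0 :=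
    coeff_const hS hzcl hC hyC hx0C
  rw [mulneg_apply, mulneg_apply] at hco
  have hgeq : (T.toFinset.filter fun a => a - y ∈ T).card
      = (T.toFinset.filter fun a => a - x0 ∈ T).card := by exact_mod_cast hco
  rw [hgeq]
  apply Finset.card_le_card
  intro a ha
  rw [Finset.mem_filter] at ha ⊢
  refine ⟨ha.1, ?_⟩
  have haT : a ∈ T := Set.mem_toFinset.mp ha.1
  have hsat := (coset_sub_block hS hprim hp hpn hT hT0 haT ha.2).1
  have : a - x0 ∈ Finset.univ.filter (fun z : ZMod n => p • z = p • a) := by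
    rw [Finset.mem_filter]
    refine ⟨Finset.mem_univ _, ?_⟩
    rw [smul_sub, hx0t, sub_zero]
  exact Set.mem_toFinset.mp (hsat this)


lemma eq_of_two_blocks (hS : IsSchurPartition S)
    (hprim : ∀ H : AddSubgroup (ZMod n), IsBlockUnion S (H : Set (ZMod n)) → H = ⊥ ∨ H = ⊤)
    (hp : p.Prime) (hpn : p ∣ n) (hplt : p < n)
    {T D : Set (ZMod n)} (hT : T ∈ S) (hD : D ∈ S) (hT0 : T ≠ {0}) (hD0 : D ≠ {0})
    (hcard : T.toFinset.card ≤ D.toFinset.card) : T = D := by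
  by_contra hTD
  set t := T.toFinset.card with htdef
  have h0T : (0 : ZMod n) ∉ T := fun h => hT0 (zero_block_unique hS hT h)
  have h0D : (0 : ZMod n) ∉ D := fun h => hD0 (zero_block_unique hS hD h)
  have hdisj : Disjoint T.toFinset D.toFinset := by
    rw [Finset.disjoint_left]
    intro x hxT hxD
    exact hTD (block_eq_of_mem hS.1 hT hD (Set.mem_toFinset.mp hxT) (Set.mem_toFinset.mp hxD))
  have hsum_le : T.toFinset.card + D.toFinset.card ≤ n - 1 := by
    have hsub : T.toFinset ∪ D.toFinset ⊆ Finset.univ.erase 0 := by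
      intro x hx
      rw [Finset.mem_erase]
      refine ⟨?_, Finset.mem_univ _⟩
      rcases Finset.mem_union.mp hx with h | h
      · exact fun h0 => h0T (h0 ▸ Set.mem_toFinset.mp h)
      · exact fun h0 => h0D (h0 ▸ Set.mem_toFinset.mp h)
    calc T.toFinset.card + D.toFinset.card = (T.toFinset ∪ D.toFinset).card :=
          (Finset.card_union_of_disjoint hdisj).symm
      _ ≤ (Finset.univ.erase (0 : ZMod n)).card := Finset.card_le_card hsub
      _ = n - 1 := by
          rw [Finset.card_erase_of_mem (Finset.mem_univ 0), Finset.card_univ, ZMod.card]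
  have h2t : 2 * t ≤ n - 1 := by omega
  set a := (T.toFinset.filter fun x => p • x = 0).card with hadef
  set tk := (T.toFinset.filter fun x => ¬ (p • x = 0)).card with htkdef
  have hsplit : a + tk = t := Finset.card_filter_add_card_filter_not _
  have ha : a ≤ p - 1 := by
    have hsub : T.toFinset.filter (fun x => p • x = 0)
        ⊆ (Finset.univ.filter fun z : ZMod n => p • z = 0).erase 0 := by
      intro x hx
      rw [Finset.mem_filter] at hx
      rw [Finset.mem_erase, Finset.mem_filter]
      exact ⟨fun h => h0T (h ▸ Set.mem_toFinset.mp hx.1), Finset.mem_univ _, hx.2⟩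
    have h1 := Finset.card_le_card hsub
    have h2 : ((Finset.univ.filter fun z : ZMod n => p • z = 0).erase 0).card
        = (Finset.univ.filter fun z : ZMod n => p • z = 0).card - 1 :=
      Finset.card_erase_of_mem (by
        rw [Finset.mem_filter]
        exact ⟨Finset.mem_univ _, smul_zero p⟩)
    have h3 := card_torsion_le (n := n) hp hpn
    omega
  have hw : ∃ w ∈ T, p • w ≠ 0 := by
    by_contra hcon
    push_neg at hcon
    set K : AddSubgroup (ZMod n) :=
      { carrier := {x | p • x = 0}
        zero_mem' := smul_zero p
        add_mem' := by
          intro x y hx hy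
          have hx' : p • x = 0 := hx
          have hy' : p • y = 0 := hy
          show p • (x + y) = 0
          rw [smul_add, hx', hy', add_zero]
        neg_mem' := by
          intro x hx
          have hx' : p • x = 0 := hx
          show p • (-x) = 0
          rw [smul_neg, hx', neg_zero] } with hK
    have hTK : T ⊆ (K : Set (ZMod n)) := fun x hx => hcon x hx
    have htop := closure_eq_top hS hprim hT hT0 hTK
    have hall : ∀ x : ZMod n, p • x = 0 := by
      intro x
      have h1 : x ∈ K := htop.symm ▸ AddSubgroup.mem_top x
      exact h1
    have hfu : (Finset.univ.filter fun z : ZMod n => p • z = 0) = Finset.univ :=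
      Finset.filter_true_of_mem (fun x _ => hall x)
    have h3 := card_torsion_le (n := n) hp hpn
    rw [hfu, Finset.card_univ, ZMod.card] at h3
    omega
  obtain ⟨w, hwT, hw0⟩ := hw
  have hcsb := coset_sub_block hS hprim hp hpn hT hT0 hwT hw0
  have htk : p ≤ tk := by
    have hsub : Finset.univ.filter (fun z : ZMod n => p • z = p • w)
        ⊆ T.toFinset.filter (fun x => ¬ (p • x = 0)) := by
      intro z hz
      have hz' := hz
      rw [Finset.mem_filter] at hz'
      rw [Finset.mem_filter]
      refine ⟨hcsb.1 hz, ?_⟩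
      rw [hz'.2]
      exact hw0
    exact hcsb.2.trans (Finset.card_le_card hsub)
  have hgN0 : (T.toFinset.filter fun x => x - (0 : ZMod n) ∈ T).card = t := by
    rw [htdef]
    congr 1
    apply Finset.filter_true_of_mem
    intro x hx
    rw [sub_zero]
    exact Set.mem_toFinset.mp hx
  have hsumgN := sum_gN (G := ZMod n) T
  have hbound : (n - 1) * tk
      ≤ ∑ y ∈ Finset.univ.erase (0 : ZMod n),
          (T.toFinset.filter fun x => x - y ∈ T).card := by
    have h1 := Finset.card_nsmul_le_sum (Finset.univ.erase (0 : ZMod n))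
      (fun y => (T.toFinset.filter fun x => x - y ∈ T).card) tk ?_
    · rw [Finset.card_erase_of_mem (Finset.mem_univ 0), Finset.card_univ, ZMod.card,
        smul_eq_mul] at h1
      exact h1
    · intro y hy
      rw [Finset.mem_erase] at hy
      exact gN_lower hS hprim hp hpn hT hT0 hy.1
  have hkey : (n - 1) * tk + t ≤ t * t := by
    have hsplitsum := Finset.sum_erase_add Finset.univ
      (fun y => (T.toFinset.filter fun x => x - y ∈ T).card) (Finset.mem_univ (0 : ZMod n))
    calc (n - 1) * tk + t
        ≤ (∑ y ∈ Finset.univ.erase (0 : ZMod n),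
            (T.toFinset.filter fun x => x - y ∈ T).card)
          + (T.toFinset.filter fun x => x - (0 : ZMod n) ∈ T).card := by
          rw [hgN0]; omega
      _ = ∑ y : ZMod n, (T.toFinset.filter fun x => x - y ∈ T).card := hsplitsum
      _ = t * t := by rw [hsumgN, sq]
  have ht0 : 0 < t := by
    obtain ⟨x, hx⟩ := block_nonempty hS hT
    exact Finset.card_pos.mpr ⟨x, Set.mem_toFinset.mpr hx⟩
  have h1le : t * (1 + 2 * tk) ≤ t * t := by
    have h2 : 2 * t * tk ≤ (n - 1) * tk := Nat.mul_le_mul_right tk h2t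
    calc t * (1 + 2 * tk) = t + 2 * t * tk := by ring
      _ ≤ t + (n - 1) * tk := by omega
      _ ≤ t * t := by omega
  have hfin : 1 + 2 * tk ≤ t := Nat.le_of_mul_le_mul_left h1le ht0
  have hp2 := hp.two_le
  omega

end SchurPf2

theorem primitive_composite_trivial' (n : ℕ) (hn : 1 < n) (hcomp : ¬ n.Prime)
    (S : Set (Set (ZMod n))) (hS : IsSchurPartition S)
    (hprim : ∀ H : AddSubgroup (ZMod n),
      IsBlockUnion S (H : Set (ZMod n)) → H = ⊥ ∨ H = ⊤) :
    S = {({0} : Set (ZMod n)), ({0}ᶜ : Set (ZMod n))} := by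
  classical
  haveI : NeZero n := ⟨by omega⟩
  haveI : Fact (1 < n) := ⟨hn⟩
  set p := n.minFac with hpdef
  have hp : p.Prime := Nat.minFac_prime (by omega)
  have hpn : p ∣ n := n.minFac_dvd
  have hplt : p < n := by
    rcases Nat.lt_or_ge p n with h | h
    · exact h
    · exfalso
      have hpe : p = n := le_antisymm (Nat.le_of_dvd (by omega) hpn) h
      exact hcomp (hpe ▸ hp)
  have huniq : ∀ C ∈ S, C ≠ {0} → C = ({0}ᶜ : Set (ZMod n)) := by
    intro C hC hC0
    ext x
    simp only [Set.mem_compl_iff, Set.mem_singleton_iff]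
    constructor
    · intro hx h0
      rw [h0] at hx
      exact hC0 (SchurPf.zero_block_unique hS hC hx)
    · intro hx0
      obtain ⟨D, ⟨hD, hxD⟩, _⟩ := hS.1.2 x
      have hD0 : D ≠ {0} := fun h => hx0 (by rw [h] at hxD; exact hxD)
      rcases le_total (C.toFinset.card) (D.toFinset.card) with h | h
      · rw [SchurPf2.eq_of_two_blocks hS hprim hp hpn hplt hC hD hC0 hD0 h]
        exact hxD
      · rw [← SchurPf2.eq_of_two_blocks hS hprim hp hpn hplt hD hC hD0 hC0 h]
        exact hxD
  have h1ne : (1 : ZMod n) ≠ 0 := one_ne_zero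
  obtain ⟨D, ⟨hD, h1D⟩, _⟩ := hS.1.2 (1 : ZMod n)
  have hD0 : D ≠ {0} := fun h => h1ne (by rw [h] at h1D; exact h1D)
  have hDc : D = ({0}ᶜ : Set (ZMod n)) := huniq D hD hD0
  ext C
  simp only [Set.mem_insert_iff, Set.mem_singleton_iff]
  constructor
  · intro hC
    by_cases h0 : (0 : ZMod n) ∈ C
    · left
      exact SchurPf.zero_block_unique hS hC h0
    · right
      apply huniq C hC
      intro h
      rw [h] at h0
      exact h0 rfl
  · rintro (rfl | rfl)
    · exact hS.2.1
    · rw [← hDc]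
      exact hD


/-- A primitive Schur partition of `ℤ/nℤ` for composite `n > 1` is the trivial one. -/
theorem primitive_composite_trivial (n : ℕ) (hn : 1 < n) (hcomp : ¬ n.Prime)
    (S : Set (Set (ZMod n))) (hS : IsSchurPartition S)
    (hprim : ∀ H : AddSubgroup (ZMod n),
      IsBlockUnion S (H : Set (ZMod n)) → H = ⊥ ∨ H = ⊤) :
    S = {({0} : Set (ZMod n)), ({0}ᶜ : Set (ZMod n))} := by
  exact primitive_composite_trivial' n hn hcomp S hS hprim
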